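/- arXiv:2310.10582 — 3 statements merged into one kernel-verified Lean document; each statement's English description precedes it below -/
import Mathlib

section
/- For every t ∈ ℝ and every α ∈ ℂ, taking ν = ω in the two-times measurement protocol gives 𝔉_{ω,t}(α) := ∑_{(b,a)∈𝒜×𝒜} λ_b^{α}·λ_a^{−α}·p_{ω,t}(b,a) = trace(ω_{−t}^{α}·ω^{1−α}). -/
open Matrix NormedSpace
open scoped ComplexOrder

noncomputable section

/-- The two-times measurement statistics
`p_{ν,t}(b,a) = trace(exp(−itH)·P_a·ν·P_a·exp(itH)·P_b)`. -/
def ttm {n 𝒜 : Type*} [Fintype n] [DecidableEq n]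
    (H : Matrix n n ℂ) (P : 𝒜 → Matrix n n ℂ) (ν : Matrix n n ℂ) (t : ℝ) (b a : 𝒜) : ℂ :=
  (NormedSpace.exp ((-(Complex.I * t)) • H) * P a * ν * P a * NormedSpace.exp ((Complex.I * t) • H) * P b).trace

/-- The complex power `ω^z = ∑_a λ_a^z · P_a` of `ω = ∑_a λ_a · P_a`. -/
def omegaPow {n 𝒜 : Type*} [Fintype 𝒜] (lam : 𝒜 → ℝ) (P : 𝒜 → Matrix n n ℂ) (z : ℂ) :
    Matrix n n ℂ :=
  ∑ a, ((lam a : ℂ) ^ z) • P a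

/-- The pinching `ν̄ = ∑_a P_a·ν·P_a`. -/
def pinch {n 𝒜 : Type*} [Fintype n] [Fintype 𝒜]
    (P : 𝒜 → Matrix n n ℂ) (ν : Matrix n n ℂ) : Matrix n n ℂ :=
  ∑ a, P a * ν * P a

theorem mgf_omega_eq_trace
    {n 𝒜 : Type*} [Fintype n] [DecidableEq n] [Nonempty n]
    [Fintype 𝒜] [DecidableEq 𝒜] [Nonempty 𝒜]
    (H : Matrix n n ℂ) (hH : H.IsHermitian)
    (P : 𝒜 → Matrix n n ℂ)
    (hPherm : ∀ a, (P a).IsHermitian)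
    (hPidem : ∀ a, P a * P a = P a)
    (hPne : ∀ a, P a ≠ 0)
    (hPorth : ∀ a b, a ≠ b → P a * P b = 0)
    (hPsum : ∑ a, P a = 1)
    (lam : 𝒜 → ℝ) (hlampos : ∀ a, 0 < lam a)
    (hlaminj : Function.Injective lam)
    (hlamsum : ∑ a, (lam a : ℂ) * (P a).trace = 1)
    (t : ℝ) (α : ℂ) :
    ∑ x : 𝒜 × 𝒜,
        (lam x.1 : ℂ) ^ α * (lam x.2 : ℂ) ^ (-α) *
          ttm H P (∑ a, (lam a : ℂ) • P a) t x.1 x.2 =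
      (NormedSpace.exp ((Complex.I * t) • H) * omegaPow lam P α * NormedSpace.exp ((-(Complex.I * t)) • H) *
        omegaPow lam P (1 - α)).trace := by
  classical
  set U := NormedSpace.exp ((Complex.I * t) • H) with hU
  set V := NormedSpace.exp ((-(Complex.I * t)) • H) with hV
  have key : ∀ a, P a * (∑ c, (lam c : ℂ) • P c) * P a = (lam a : ℂ) • P a := by
    intro a
    rw [Finset.mul_sum, Finset.sum_mul]
    rw [Finset.sum_eq_single a]
    · rw [mul_smul_comm, smul_mul_assoc, hPidem a, hPidem a]
    · intro c _ hc
      rw [mul_smul_comm, hPorth a c (Ne.symm hc), smul_zero, zero_mul]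
    · intro h; exact absurd (Finset.mem_univ a) h
  have httm : ∀ b a, ttm H P (∑ c, (lam c : ℂ) • P c) t b a
      = (lam a : ℂ) * (U * P b * V * P a).trace := by
    intro b a
    unfold ttm
    rw [← hU, ← hV]
    have h1 : V * P a * (∑ c, (lam c : ℂ) • P c) * P a = (lam a : ℂ) • (V * P a) := by
      rw [mul_assoc, mul_assoc, ← mul_assoc (P a), key a, mul_smul_comm]
    rw [h1, smul_mul_assoc, smul_mul_assoc, trace_smul, smul_eq_mul]
    have h2 : (V * P a * U * P b).trace = (U * P b * V * P a).trace := by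
      rw [mul_assoc (V * P a), Matrix.trace_mul_comm, mul_assoc (U * P b)]
    rw [h2]
  rw [Fintype.sum_prod_type]
  have hRHS : (U * omegaPow lam P α * V * omegaPow lam P (1 - α)).trace
      = ∑ b, ∑ a, (lam b : ℂ) ^ α * (lam a : ℂ) ^ (1 - α) * (U * P b * V * P a).trace := by
    unfold omegaPow
    simp only [Finset.mul_sum, Finset.sum_mul, trace_sum, mul_smul_comm, smul_mul_assoc,
      trace_smul, smul_smul, smul_eq_mul]
    rw [Finset.sum_comm]
    apply Finset.sum_congr rfl; intro b _
    apply Finset.sum_congr rfl; intro a _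
    ring
  rw [hRHS]
  apply Finset.sum_congr rfl; intro b _
  apply Finset.sum_congr rfl; intro a _
  rw [httm b a]
  have hx : (lam a : ℂ) ≠ 0 := Complex.ofReal_ne_zero.mpr (hlampos a).ne'
  have : (lam a : ℂ) ^ (1 - α) = (lam a : ℂ) * (lam a : ℂ) ^ (-α) := by
    rw [show (1 - α) = 1 + (-α) by ring, Complex.cpow_add _ _ hx, Complex.cpow_one]
  rw [this]; ring
end
end

section
/- (Finite-dimensional form of Theorem 2(2).) For every t ∈ ℝ and every α ∈ ℂ: trace(ω_{−t}^{α}·ω^{1−α}) = conj( trace(ω_{t}^{1−conj(α)}·ω^{conj(α)}) ); i.e. the moment generating function satisfies 𝔉_{ω,t}(α) = conj(𝔉_{ω,−t}(1 − conj(α))). -/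
open Matrix NormedSpace
open scoped ComplexOrder

noncomputable section

section aux
variable {n 𝒜 : Type*} [Fintype n] [DecidableEq n] [Fintype 𝒜]

set_option linter.unusedSectionVars false in
lemma omegaPow_conjTranspose (lam : 𝒜 → ℝ) (hlampos : ∀ a, 0 < lam a)
    (P : 𝒜 → Matrix n n ℂ) (hPherm : ∀ a, (P a).IsHermitian) (z : ℂ) :
    (∑ a, ((lam a : ℂ) ^ z) • P a)ᴴ = ∑ a, ((lam a : ℂ) ^ (starRingEnd ℂ z)) • P a := by
  rw [conjTranspose_sum]
  refine Finset.sum_congr rfl fun a _ => ?_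
  rw [conjTranspose_smul, (hPherm a).eq]
  congr 1
  have harg : ((lam a : ℂ)).arg ≠ Real.pi := by
    rw [Complex.arg_ofReal_of_nonneg (hlampos a).le]
    exact Real.pi_ne_zero.symm
  rw [Complex.cpow_conj _ _ harg, Complex.conj_ofReal]
  rfl

lemma exp_smul_conjTranspose (H : Matrix n n ℂ) (hH : H.IsHermitian) (c : ℂ) :
    (NormedSpace.exp (c • H))ᴴ = NormedSpace.exp ((starRingEnd ℂ c) • H) := by
  rw [← Matrix.exp_conjTranspose, conjTranspose_smul, hH.eq]; rfl

end aux

theorem mgf_time_reflection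
    {n 𝒜 : Type*} [Fintype n] [DecidableEq n] [Nonempty n]
    [Fintype 𝒜] [DecidableEq 𝒜] [Nonempty 𝒜]
    (H : Matrix n n ℂ) (hH : H.IsHermitian)
    (P : 𝒜 → Matrix n n ℂ)
    (hPherm : ∀ a, (P a).IsHermitian)
    (hPidem : ∀ a, P a * P a = P a)
    (hPne : ∀ a, P a ≠ 0)
    (hPorth : ∀ a b, a ≠ b → P a * P b = 0)
    (hPsum : ∑ a, P a = 1)
    (lam : 𝒜 → ℝ) (hlampos : ∀ a, 0 < lam a)
    (hlaminj : Function.Injective lam)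
    (hlamsum : ∑ a, (lam a : ℂ) * (P a).trace = 1)
    (t : ℝ) (α : ℂ) :
    (NormedSpace.exp ((Complex.I * t) • H) * omegaPow lam P α * NormedSpace.exp ((-(Complex.I * t)) • H) *
        omegaPow lam P (1 - α)).trace =
      (starRingEnd ℂ)
        ((NormedSpace.exp ((-(Complex.I * t)) • H) * omegaPow lam P (1 - (starRingEnd ℂ) α) *
            NormedSpace.exp ((Complex.I * t) • H) * omegaPow lam P ((starRingEnd ℂ) α)).trace) := by
  rw [show ∀ z : ℂ, (starRingEnd ℂ) z = star z from fun _ => rfl,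
    ← Matrix.trace_conjTranspose]
  simp only [conjTranspose_mul, omegaPow,
    omegaPow_conjTranspose lam hlampos P hPherm,
    exp_smul_conjTranspose H hH, map_sub, _root_.map_one, Complex.conj_conj,
    map_neg, _root_.map_mul, Complex.conj_I, Complex.conj_ofReal, neg_neg, neg_mul]
  simp only [mul_assoc]
  rw [Matrix.trace_mul_comm]
  simp only [mul_assoc]
end
end

section
/- (Finite-dimensional form of Theorem 2(3), the finite time Evans–Searles fluctuation relation.) Under the time-reversal invariance assumption, for every t ∈ ℝ and every α ∈ ℂ: trace(ω_{−t}^{α}·ω^{1−α}) = conj( trace(ω_{−t}^{1−conj(α)}·ω^{conj(α)}) ); i.e. 𝔉_{ω,t}(α) = conj(𝔉_{ω,t}(1 − conj(α))). -/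
open Matrix NormedSpace
open scoped ComplexOrder

noncomputable section

/-- Entrywise conjugation commutes with trace. -/
lemma trace_map_conj {n : Type*} [Fintype n] (A : Matrix n n ℂ) :
    (A.map (starRingEnd ℂ)).trace = (starRingEnd ℂ) A.trace := by
  simp [Matrix.trace, Matrix.diag, map_sum]

/-- Entrywise conjugation commutes with scalar multiplication. -/
lemma smul_map_conj {n : Type*} (z : ℂ) (A : Matrix n n ℂ) :
    ((z • A).map (starRingEnd ℂ)) = ((starRingEnd ℂ) z) • A.map (starRingEnd ℂ) := by
  ext i j; simp

/-- Entrywise conjugation as transpose of conjTranspose. -/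
lemma map_conj_eq {n : Type*} (A : Matrix n n ℂ) :
    A.map (starRingEnd ℂ) = (Aᴴ)ᵀ := by
  ext i j; simp [Matrix.conjTranspose]

/-- Entrywise conjugation commutes with the matrix exponential. -/
lemma exp_map_conj {n : Type*} [Fintype n] [DecidableEq n] (A : Matrix n n ℂ) :
    (NormedSpace.exp A).map (starRingEnd ℂ) = NormedSpace.exp (A.map (starRingEnd ℂ)) := by
  rw [map_conj_eq, map_conj_eq, ← Matrix.exp_conjTranspose, ← Matrix.exp_transpose]

theorem evans_searles_finite_time
    {n 𝒜 : Type*} [Fintype n] [DecidableEq n] [Nonempty n]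
    [Fintype 𝒜] [DecidableEq 𝒜] [Nonempty 𝒜]
    (H : Matrix n n ℂ) (hH : H.IsHermitian)
    (P : 𝒜 → Matrix n n ℂ)
    (hPherm : ∀ a, (P a).IsHermitian)
    (hPidem : ∀ a, P a * P a = P a)
    (hPne : ∀ a, P a ≠ 0)
    (hPorth : ∀ a b, a ≠ b → P a * P b = 0)
    (hPsum : ∑ a, P a = 1)
    (lam : 𝒜 → ℝ) (hlampos : ∀ a, 0 < lam a)
    (hlaminj : Function.Injective lam)
    (hlamsum : ∑ a, (lam a : ℂ) * (P a).trace = 1)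
    (hTR : ∃ U : Matrix n n ℂ, U * Uᴴ = 1 ∧ Uᴴ * U = 1 ∧
      U * U.map (starRingEnd ℂ) = 1 ∧
      U * H.map (starRingEnd ℂ) * Uᴴ = H ∧
      ∀ a, U * (P a).map (starRingEnd ℂ) * Uᴴ = P a)
    (t : ℝ) (α : ℂ) :
    (NormedSpace.exp ((Complex.I * t) • H) * omegaPow lam P α * NormedSpace.exp ((-(Complex.I * t)) • H) *
        omegaPow lam P (1 - α)).trace =
      (starRingEnd ℂ)
        ((NormedSpace.exp ((Complex.I * t) • H) * omegaPow lam P (1 - (starRingEnd ℂ) α) *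
            NormedSpace.exp ((-(Complex.I * t)) • H) * omegaPow lam P ((starRingEnd ℂ) α)).trace) := by
  obtain ⟨U, hUU, hU'U, hUc, hUH, hUP⟩ := hTR
  have hUinv : U⁻¹ = Uᴴ := Matrix.inv_eq_right_inv hUU
  have hUnit : IsUnit U := ⟨⟨U, Uᴴ, hUU, hU'U⟩, rfl⟩
  set c := starRingEnd ℂ
  -- conjugation of cpow of positive reals
  have hcpow : ∀ (a : 𝒜) (z : ℂ), c ((lam a : ℂ) ^ z) = (lam a : ℂ) ^ (c z) := by
    intro a z
    have harg : ((lam a : ℂ)).arg ≠ Real.pi := by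
      rw [Complex.arg_ofReal_of_nonneg (hlampos a).le]
      exact fun h => Real.pi_ne_zero h.symm
    have h := Complex.conj_cpow (lam a : ℂ) ((starRingEnd ℂ) z) harg
    simp only [Complex.conj_ofReal, Complex.conj_conj] at h
    exact h.symm
  -- conjugation of omegaPow
  have homega : ∀ z : ℂ, (omegaPow lam P z).map c
      = ∑ a, ((lam a : ℂ) ^ (c z)) • (P a).map c := by
    intro z
    ext i j
    simp only [omegaPow, Matrix.map_apply, Matrix.sum_apply, Matrix.smul_apply,
      smul_eq_mul, map_sum]
    exact Finset.sum_congr rfl fun a _ => by rw [_root_.map_mul, hcpow]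
  -- conjugating omegaPow by U gives back omegaPow
  have hUomega : ∀ z : ℂ, U * (omegaPow lam P z).map c * Uᴴ = omegaPow lam P (c z) := by
    intro z
    rw [homega]
    rw [Finset.mul_sum, Finset.sum_mul]
    unfold omegaPow
    refine Finset.sum_congr rfl fun a _ => ?_
    rw [Matrix.mul_smul, Matrix.smul_mul, hUP a]
  -- conjugating exp by U
  have hUexp : ∀ s : ℂ, U * (NormedSpace.exp (s • H)).map c * Uᴴ = NormedSpace.exp ((c s) • H) := by
    intro s
    rw [exp_map_conj, smul_map_conj, ← hUinv,
      ← Matrix.exp_conj U ((c s) • H.map ⇑c) hUnit,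
      Matrix.mul_smul, Matrix.smul_mul, hUinv, hUH]
  -- trace is invariant under conjugation by U
  have htrU : ∀ A : Matrix n n ℂ, (U * A * Uᴴ).trace = A.trace := by
    intro A
    rw [Matrix.trace_mul_cycle, hU'U, Matrix.one_mul]
  -- main computation
  rw [← trace_map_conj]
  have hmap : ((NormedSpace.exp ((Complex.I * t) • H) * omegaPow lam P (1 - c α) *
      NormedSpace.exp ((-(Complex.I * t)) • H) * omegaPow lam P (c α)).map c)
      = (NormedSpace.exp ((Complex.I * t) • H)).map c * (omegaPow lam P (1 - c α)).map c *
        (NormedSpace.exp ((-(Complex.I * t)) • H)).map c * (omegaPow lam P (c α)).map c := by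
    rw [Matrix.map_mul, Matrix.map_mul, Matrix.map_mul]
  rw [hmap, ← htrU ((NormedSpace.exp ((Complex.I * t) • H)).map ⇑c * (omegaPow lam P (1 - c α)).map ⇑c *
        (NormedSpace.exp ((-(Complex.I * t)) • H)).map ⇑c * (omegaPow lam P (c α)).map ⇑c)]
  have hexpand : U * ((NormedSpace.exp ((Complex.I * t) • H)).map c * (omegaPow lam P (1 - c α)).map c *
        (NormedSpace.exp ((-(Complex.I * t)) • H)).map c * (omegaPow lam P (c α)).map c) * Uᴴ
      = (U * (NormedSpace.exp ((Complex.I * t) • H)).map c * Uᴴ) *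
        (U * (omegaPow lam P (1 - c α)).map c * Uᴴ) *
        (U * (NormedSpace.exp ((-(Complex.I * t)) • H)).map c * Uᴴ) *
        (U * (omegaPow lam P (c α)).map c * Uᴴ) := by
    have h1 : Uᴴ * U = 1 := hU'U
    -- expand by inserting Uᴴ * U = 1
    simp only [Matrix.mul_assoc]
    rw [← Matrix.mul_assoc Uᴴ U, h1, Matrix.one_mul,
        ← Matrix.mul_assoc Uᴴ U, h1, Matrix.one_mul,
        ← Matrix.mul_assoc Uᴴ U, h1, Matrix.one_mul]
  rw [hexpand, hUexp, hUexp, hUomega, hUomega]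
  have hc1 : c (1 - c α) = 1 - α := by simp [c]
  have hcc : c (c α) = α := by simp [c]
  have hci : c (Complex.I * t) = -(Complex.I * t) := by
    simp [c, Complex.conj_ofReal]
  have hci' : c (-(Complex.I * t)) = Complex.I * t := by
    simp [c, Complex.conj_ofReal]
  rw [hc1, hcc, hci, hci']
  -- now use cyclicity of trace
  rw [show NormedSpace.exp ((-(Complex.I * ↑t)) • H) * omegaPow lam P (1 - α) *
        NormedSpace.exp ((Complex.I * ↑t) • H) * omegaPow lam P α
      = (NormedSpace.exp ((-(Complex.I * ↑t)) • H) * omegaPow lam P (1 - α)) *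
        (NormedSpace.exp ((Complex.I * ↑t) • H) * omegaPow lam P α) from by
    simp only [Matrix.mul_assoc]]
  rw [Matrix.trace_mul_comm]
  simp only [Matrix.mul_assoc]
  rw [show omegaPow lam P (1 - α) *
        (NormedSpace.exp ((Complex.I * ↑t) • H) * (omegaPow lam P α * NormedSpace.exp ((-(Complex.I * ↑t)) • H)))
      = (omegaPow lam P (1 - α) * (NormedSpace.exp ((Complex.I * ↑t) • H) * omegaPow lam P α)) *
        NormedSpace.exp ((-(Complex.I * ↑t)) • H) from by simp only [Matrix.mul_assoc]]
  rw [Matrix.trace_mul_comm]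
end
end
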